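/- arXiv:1910.06550 — 2 statements merged into one kernel-verified Lean document; each statement's English description precedes it below -/
import Mathlib

section
/- Let f : ℝ → ℝ satisfy f(s)=0 for s≤0 and f continuous and strictly increasing on [0,∞), and let F(s) = ∫₀^s f⁻¹(r) dr where f⁻¹ is the inverse of f on [0,∞) extended by 0. Then the following are equivalent: (i) there exists δ₀ ∈ (0,1) such that ∫₀^s f(r) dr ≤ δ₀ f(s) s for all s ≥ 0; (ii) there exists δ₁ ∈ (0,1) such that F(s) ≥ δ₁ s f⁻¹(s) for all s ≥ 0. -/
open Set intervalIntegral MeasureTheory Filter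

/-- Equivalence of hypotheses (H3) and (H3)': for `f` vanishing on `(-∞,0]`, continuous and
strictly increasing on `[0,∞)`, with (two-sided) inverse `finv` extended by `0`, and
`F s = ∫₀^s f⁻¹`, one has
`(∃ δ₀ ∈ (0,1), ∀ s ≥ 0, ∫₀^s f ≤ δ₀ f(s) s) ↔ (∃ δ₁ ∈ (0,1), ∀ s ≥ 0, F s ≥ δ₁ s f⁻¹(s))`. -/
theorem H3_iff_H3' (f finv : ℝ → ℝ)
    (hf0 : ∀ s ≤ (0:ℝ), f s = 0)
    (hfc : ContinuousOn f (Ici 0))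
    (hfm : StrictMonoOn f (Ici 0))
    (hinv0 : ∀ r ≤ (0:ℝ), finv r = 0)
    (hinvl : ∀ s ≥ (0:ℝ), finv (f s) = s)
    (hinvr : ∀ r ≥ (0:ℝ), f (finv r) = r)
    (F : ℝ → ℝ) (hF : ∀ s, F s = ∫ r in (0:ℝ)..s, finv r) :
    (∃ δ₀ ∈ Ioo (0:ℝ) 1, ∀ s ≥ (0:ℝ), (∫ r in (0:ℝ)..s, f r) ≤ δ₀ * (f s * s)) ↔
      (∃ δ₁ ∈ Ioo (0:ℝ) 1, ∀ s ≥ (0:ℝ), δ₁ * (s * finv s) ≤ F s) := by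
  have hf00 : f 0 = 0 := hf0 0 le_rfl
  have hfmono : MonotoneOn f (Ici 0) := hfm.monotoneOn
  have hfnn : ∀ s, 0 ≤ s → 0 ≤ f s := by
    intro s hs
    have := hfmono (self_mem_Ici) hs hs
    rwa [hf00] at this
  have hinv00 : finv 0 = 0 := by
    have := hinvl 0 le_rfl; rwa [hf00] at this
  have hinvnn : ∀ r, 0 ≤ r → 0 ≤ finv r := by
    intro r hr
    by_contra h
    push_neg at h
    have h1 : f (finv r) = 0 := hf0 _ h.le
    have h2 := hinvr r hr
    have hr0 : r = 0 := by rw [← h2, h1]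
    rw [hr0, hinv00] at h
    exact absurd h (lt_irrefl 0)
  have hinvmono : MonotoneOn finv (Ici 0) := by
    intro a ha b hb hab
    refine (hfm.le_iff_le (hinvnn a ha) (hinvnn b hb)).mp ?_
    rw [hinvr a ha, hinvr b hb]; exact hab
  have hfi : ∀ a b, 0 ≤ a → a ≤ b → IntervalIntegrable f volume a b := by
    intro a b ha hab
    apply ContinuousOn.intervalIntegrable
    apply hfc.mono
    rw [uIcc_of_le hab]
    exact fun x hx => le_trans ha hx.1
  have hii : ∀ a b, 0 ≤ a → a ≤ b → IntervalIntegrable finv volume a b := by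
    intro a b ha hab
    apply MonotoneOn.intervalIntegrable
    apply hinvmono.mono
    rw [uIcc_of_le hab]
    exact fun x hx => le_trans ha hx.1
  -- the key incremental estimate
  have key : ∀ a b, 0 ≤ a → a ≤ b →
      |b * f b - a * f a - (∫ r in a..b, f r) - ∫ r in f a..f b, finv r|
        ≤ (b - a) * (f b - f a) := by
    intro a b ha hab
    have hb : 0 ≤ b := ha.trans hab
    have hfab : f a ≤ f b := hfmono ha hb hab
    have hfa : 0 ≤ f a := hfnn a ha
    have hIf1 : (b - a) * f a ≤ ∫ r in a..b, f r := by
      have := integral_mono_on (μ := volume) hab (intervalIntegrable_const) (hfi a b ha hab)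
        (fun x hx => hfmono ha (ha.trans hx.1) hx.1)
      simpa using this
    have hIf2 : (∫ r in a..b, f r) ≤ (b - a) * f b := by
      have := integral_mono_on (μ := volume) hab (hfi a b ha hab) (intervalIntegrable_const)
        (fun x hx => hfmono (ha.trans hx.1) hb hx.2)
      simpa using this
    have hIi1 : (f b - f a) * a ≤ ∫ r in f a..f b, finv r := by
      have := integral_mono_on (μ := volume) hfab (intervalIntegrable_const)
        (hii (f a) (f b) hfa hfab)
        (fun x hx => by
          have : finv (f a) ≤ finv x := hinvmono hfa (hfa.trans hx.1) hx.1
          rwa [hinvl a ha] at this)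
      simpa using this
    have hIi2 : (∫ r in f a..f b, finv r) ≤ (f b - f a) * b := by
      have := integral_mono_on (μ := volume) hfab (hii (f a) (f b) hfa hfab)
        (intervalIntegrable_const)
        (fun x hx => by
          have : finv x ≤ finv (f b) := hinvmono (hfa.trans hx.1) (hfa.trans hfab) hx.2
          rwa [hinvl b hb] at this)
      simpa using this
    rw [abs_le]
    constructor <;> nlinarith [hIf1, hIf2, hIi1, hIi2]
  -- Young's equality
  have young : ∀ s, 0 ≤ s →
      (∫ r in (0:ℝ)..s, f r) + (∫ r in (0:ℝ)..f s, finv r) = s * f s := by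
    intro s hs
    set H : ℝ → ℝ :=
      fun t => t * f t - (∫ r in (0:ℝ)..t, f r) - ∫ r in (0:ℝ)..f t, finv r with hH
    have hH0 : H 0 = 0 := by simp [hH, hf00]
    have hstep : ∀ a b, 0 ≤ a → a ≤ b → |H b - H a| ≤ (b - a) * (f b - f a) := by
      intro a b ha hab
      have hb : 0 ≤ b := ha.trans hab
      have h1 : (∫ r in (0:ℝ)..b, f r) = (∫ r in (0:ℝ)..a, f r) + ∫ r in a..b, f r :=
        (integral_add_adjacent_intervals (hfi 0 a le_rfl ha) (hfi a b ha hab)).symm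
      have h2 : (∫ r in (0:ℝ)..f b, finv r)
          = (∫ r in (0:ℝ)..f a, finv r) + ∫ r in f a..f b, finv r :=
        (integral_add_adjacent_intervals (hii 0 (f a) le_rfl (hfnn a ha))
          (hii (f a) (f b) (hfnn a ha) (hfmono ha hb hab))).symm
      have hEq : H b - H a
          = b * f b - a * f a - (∫ r in a..b, f r) - ∫ r in f a..f b, finv r := by
        simp only [hH]
        rw [h1, h2]; ring
      rw [hEq]
      exact key a b ha hab
    have habs : ∀ n : ℕ, 1 ≤ n → |H s| ≤ s * f s / n := by
      intro n hn
      have hn' : (0:ℝ) < n := by exact_mod_cast hn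
      set x : ℕ → ℝ := fun i => s * i / n with hx
      have hx0 : x 0 = 0 := by simp [hx]
      have hxn : x n = s := by simp only [hx]; field_simp [hn'.ne']
      have hxm : ∀ i : ℕ, 0 ≤ x i := by
        intro i
        have : (0:ℝ) ≤ (i:ℝ) := Nat.cast_nonneg i
        positivity
      have hxle : ∀ i : ℕ, x i ≤ x (i + 1) := by
        intro i
        simp only [hx]
        gcongr
        push_cast
        linarith
      have hd : ∀ i : ℕ, x (i + 1) - x i = s / n := by
        intro i
        simp only [hx]
        push_cast
        field_simp
        ring
      have hts : H s = ∑ i ∈ Finset.range n, (H (x (i + 1)) - H (x i)) := by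
        rw [Finset.sum_range_sub (fun i => H (x i)), hx0, hxn, hH0, sub_zero]
      have hfsum : ∑ i ∈ Finset.range n, (f (x (i + 1)) - f (x i)) = f s := by
        rw [Finset.sum_range_sub (fun i => f (x i)), hx0, hxn, hf00, sub_zero]
      calc |H s| ≤ ∑ i ∈ Finset.range n, |H (x (i + 1)) - H (x i)| := by
            rw [hts]; exact Finset.abs_sum_le_sum_abs _ _
        _ ≤ ∑ i ∈ Finset.range n, (s / n) * (f (x (i + 1)) - f (x i)) := by
            apply Finset.sum_le_sum
            intro i _
            have h := hstep (x i) (x (i + 1)) (hxm i) (hxle i)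
            rwa [hd i] at h
        _ = s * f s / n := by rw [← Finset.mul_sum, hfsum]; ring
    have hle : |H s| ≤ 0 := by
      have hlim : Tendsto (fun n : ℕ => s * f s / n) atTop (nhds 0) :=
        tendsto_const_div_atTop_nhds_zero_nat _
      exact ge_of_tendsto hlim (Filter.eventually_atTop.mpr ⟨1, fun n hn => habs n hn⟩)
    have hHs : H s = 0 := abs_eq_zero.mp (le_antisymm hle (abs_nonneg _))
    simp only [hH] at hHs
    linarith
  constructor
  · rintro ⟨δ₀, ⟨hδ0, hδ1⟩, hδ⟩
    refine ⟨1 - δ₀, ⟨by linarith, by linarith⟩, ?_⟩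
    intro s hs
    have ht : 0 ≤ finv s := hinvnn s hs
    have hy := young (finv s) ht
    rw [hinvr s hs] at hy
    have h1 := hδ (finv s) ht
    rw [hinvr s hs] at h1
    rw [hF]
    linarith [hy, h1]
  · rintro ⟨δ₁, ⟨ha1, ha2⟩, hδ⟩
    refine ⟨1 - δ₁, ⟨by linarith, by linarith⟩, ?_⟩
    intro s hs
    have hy := young s hs
    have h3 := hδ (f s) (hfnn s hs)
    rw [hF, hinvl s hs] at h3
    linarith [hy, h3]
end

section
/- If f : ℝ → ℝ is continuous and strictly increasing on [0,∞) with f(0)=0, and there exists δ₀ ∈ (0,1) with ∫₀^s f(r) dr ≤ δ₀ f(s) s for all s ≥ 0, and f is not identically zero on [0,∞), then f(s) → +∞ as s → +∞. -/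
open Set Filter

/-- If `f` is continuous and strictly increasing on `[0,∞)` with `f 0 = 0`, satisfies (H3),
and is not identically zero on `[0,∞)`, then `f(s) → +∞` as `s → +∞`. -/
theorem tendsto_atTop_of_H3 (f : ℝ → ℝ)
    (hfc : ContinuousOn f (Ici 0))
    (hfm : StrictMonoOn f (Ici 0))
    (hf0 : f 0 = 0)
    (hH3 : ∃ δ₀ ∈ Ioo (0:ℝ) 1, ∀ s ≥ (0:ℝ), (∫ r in (0:ℝ)..s, f r) ≤ δ₀ * (f s * s))
    (hne : ¬ ∀ s ≥ (0:ℝ), f s = 0) :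
    Tendsto f atTop atTop := by
  obtain ⟨δ₀, ⟨hδ0, hδ1⟩, hH3⟩ := hH3
  set c : ℝ := (1 - δ₀) / 2 with hc
  have hc0 : 0 < c := by rw [hc]; linarith
  have hc1 : c < 1 := by rw [hc]; linarith
  set lam : ℝ := (1 - c) / δ₀ with hlam
  have hlam1 : 1 < lam := by
    rw [hlam, lt_div_iff₀ hδ0, hc]; linarith
  have hI : ∀ u v : ℝ, 0 ≤ u → u ≤ v → IntervalIntegrable f MeasureTheory.volume u v := by
    intro u v hu huv
    apply (hfc.mono ?_).intervalIntegrable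
    rw [uIcc_of_le huv]
    intro x hx
    exact le_trans hu hx.1
  have hfnn : ∀ x : ℝ, 0 ≤ x → 0 ≤ f x := by
    intro x hx
    rw [← hf0]
    exact hfm.monotoneOn self_mem_Ici (mem_Ici.2 hx) hx
  have key : ∀ s > (0:ℝ), lam * f (c * s) ≤ f s := by
    intro s hs
    have ha : 0 < c * s := mul_pos hc0 hs
    have hcs : c * s < s := by nlinarith
    have h1 : (0:ℝ) ≤ ∫ r in (0:ℝ)..(c*s), f r :=
      intervalIntegral.integral_nonneg ha.le (fun x hx => hfnn x hx.1)
    have h2 : (s - c*s) * f (c*s) ≤ ∫ r in (c*s)..s, f r := by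
      have hm := intervalIntegral.integral_mono_on (f := fun _ => f (c*s)) (g := f)
        hcs.le intervalIntegrable_const (hI _ _ ha.le hcs.le)
        (fun x hx => hfm.monotoneOn (mem_Ici.2 ha.le) (mem_Ici.2 (ha.le.trans hx.1)) hx.1)
      simpa [smul_eq_mul] using hm
    have hsplit : (∫ r in (0:ℝ)..(c*s), f r) + (∫ r in (c*s)..s, f r) = ∫ r in (0:ℝ)..s, f r :=
      intervalIntegral.integral_add_adjacent_intervals (hI 0 (c*s) le_rfl ha.le)
        (hI (c*s) s ha.le hcs.le)
    have h3 := hH3 s hs.le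
    have h4 : (s - c*s) * f (c*s) ≤ δ₀ * (f s * s) := by linarith
    rw [hlam, div_mul_eq_mul_div, div_le_iff₀ hδ0]
    nlinarith [hs, h4]
  have hf1 : 0 < f 1 := by
    rw [← hf0]
    exact hfm self_mem_Ici (mem_Ici.2 zero_le_one) one_pos
  have hiter : ∀ n : ℕ, lam ^ n * f 1 ≤ f ((1/c)^n) := by
    intro n
    induction n with
    | zero => simp
    | succ n ih =>
      have hpow : (0:ℝ) < (1/c)^(n+1) := by positivity
      have hk := key _ hpow
      have hcc : c * (1/c)^(n+1) = (1/c)^n := by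
        rw [pow_succ, ← mul_assoc, mul_comm c, mul_assoc, one_div, mul_inv_cancel₀ hc0.ne', mul_one]
      rw [hcc] at hk
      have hlamnn : (0:ℝ) ≤ lam := by linarith
      calc lam^(n+1) * f 1 = lam * (lam^n * f 1) := by ring
        _ ≤ lam * f ((1/c)^n) := mul_le_mul_of_nonneg_left ih hlamnn
        _ ≤ f ((1/c)^(n+1)) := hk
  rw [tendsto_atTop_atTop]
  intro M
  obtain ⟨n, hn⟩ := (((tendsto_pow_atTop_atTop_of_one_lt hlam1).atTop_mul_const hf1).eventually_ge_atTop M).exists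
  refine ⟨(1/c)^n, fun s hs => ?_⟩
  have h1 : (0:ℝ) < (1/c)^n := by positivity
  calc M ≤ lam^n * f 1 := hn
    _ ≤ f ((1/c)^n) := hiter n
    _ ≤ f s := hfm.monotoneOn (mem_Ici.2 h1.le) (mem_Ici.2 (h1.le.trans hs)) hs
end
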